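/- Equality case of the overlap bound: for α ∈ (0,1), the overlap satisfies U(α) = 1 if and only if p₀ = p₁ almost everywhere on Ω. -/

import Mathlib

open MeasureTheory Real Set

/-- The overlap integral `U(α) = ∫_Ω p₀ p₁ / (α p₀ + (1-α) p₁)`. -/
noncomputable def overlap (Ω : Set ℝ) (p₀ p₁ : ℝ → ℝ) (α : ℝ) : ℝ :=
  ∫ w in Ω, p₀ w * p₁ w / (α * p₀ w + (1 - α) * p₁ w)

/-- Equality case of the overlap bound: for `α ∈ (0,1)`, the overlap satisfies
`U(α) = 1` if and only if `p₀ = p₁` almost everywhere on `Ω`. -/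
theorem overlap_eq_one_iff
    (p₀ p₁ : ℝ → ℝ) (Ω : Set ℝ)
    (hm0 : Measurable p₀) (hm1 : Measurable p₁)
    (hpos0 : ∀ w, 0 ≤ p₀ w) (hpos1 : ∀ w, 0 ≤ p₁ w)
    (hnorm0 : ∫ w, p₀ w = 1) (hnorm1 : ∫ w, p₁ w = 1)
    (hΩ0 : Ω = {w | 0 < p₀ w}) (hΩ1 : Ω = {w | 0 < p₁ w})
    (α : ℝ) (hα : α ∈ Ioo (0:ℝ) 1) :
    overlap Ω p₀ p₁ α = 1 ↔ (∀ᵐ w ∂(volume.restrict Ω), p₀ w = p₁ w) := by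
  obtain ⟨hα0, hα1⟩ := hα
  have hβ0 : 0 < 1 - α := by linarith
  have hΩmeas : MeasurableSet Ω := by
    rw [hΩ0]; exact measurableSet_lt measurable_const hm0
  have hi0 : Integrable p₀ := by
    by_contra h; rw [integral_undef h] at hnorm0; norm_num at hnorm0
  have hi1 : Integrable p₁ := by
    by_contra h; rw [integral_undef h] at hnorm1; norm_num at hnorm1
  set f : ℝ → ℝ := fun w => p₀ w * p₁ w / (α * p₀ w + (1 - α) * p₁ w) with hf
  set g : ℝ → ℝ := fun w => (1 - α) * p₀ w + α * p₁ w with hg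
  have key : ∀ w ∈ Ω, 0 < p₀ w ∧ 0 < p₁ w := fun w hw =>
    ⟨by rw [hΩ0] at hw; exact hw, by rw [hΩ1] at hw; exact hw⟩
  have hdpos : ∀ w ∈ Ω, 0 < α * p₀ w + (1 - α) * p₁ w := by
    intro w hw
    obtain ⟨h0, h1⟩ := key w hw
    positivity
  have hpt : ∀ w ∈ Ω, g w - f w
      = α * (1 - α) * (p₀ w - p₁ w) ^ 2 / (α * p₀ w + (1 - α) * p₁ w) := by
    intro w hw
    have hd := hdpos w hw
    simp only [hg, hf]
    field_simp
    ring
  -- ∫ p₀ over Ω is 1, similarly p₁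
  have hzero0 : ∀ w ∉ Ω, p₀ w = 0 := by
    intro w hw
    rw [hΩ0] at hw
    exact le_antisymm (not_lt.mp hw) (hpos0 w)
  have hzero1 : ∀ w ∉ Ω, p₁ w = 0 := by
    intro w hw
    rw [hΩ1] at hw
    exact le_antisymm (not_lt.mp hw) (hpos1 w)
  have hI0 : ∫ w in Ω, p₀ w = 1 := by
    rw [setIntegral_eq_integral_of_forall_compl_eq_zero hzero0]; exact hnorm0
  have hI1 : ∫ w in Ω, p₁ w = 1 := by
    rw [setIntegral_eq_integral_of_forall_compl_eq_zero hzero1]; exact hnorm1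
  have hig : Integrable g (volume.restrict Ω) :=
    ((hi0.restrict.const_mul (1 - α)).add (hi1.restrict.const_mul α))
  have hIg : ∫ w in Ω, g w = 1 := by
    rw [hg]
    rw [integral_add (hi0.restrict.const_mul (1 - α)) (hi1.restrict.const_mul α),
      integral_const_mul, integral_const_mul, hI0, hI1]
    ring
  have hfm : Measurable f :=
    (hm0.mul hm1).div ((measurable_const.mul hm0).add (measurable_const.mul hm1))
  have hfle : ∀ w ∈ Ω, f w ≤ g w ∧ 0 ≤ f w := by
    intro w hw
    have hd := hdpos w hw
    obtain ⟨h0, h1⟩ := key w hw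
    constructor
    · have h1 := hpt w hw
      have h2 : 0 ≤ α * (1 - α) * (p₀ w - p₁ w) ^ 2 / (α * p₀ w + (1 - α) * p₁ w) := by
        positivity
      rw [← h1] at h2
      linarith
    · exact div_nonneg (mul_nonneg h0.le h1.le) hd.le
  have hif : Integrable f (volume.restrict Ω) := by
    refine hig.mono' hfm.aestronglyMeasurable ?_
    refine (ae_restrict_iff' hΩmeas).2 (ae_of_all _ fun w hw => ?_)
    obtain ⟨hle, hnn⟩ := hfle w hw
    rw [Real.norm_eq_abs, abs_of_nonneg hnn]
    exact hle
  have hnnae : 0 ≤ᵐ[volume.restrict Ω] fun w => g w - f w := by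
    refine (ae_restrict_iff' hΩmeas).2 (ae_of_all _ fun w hw => ?_)
    exact sub_nonneg.mpr (hfle w hw).1
  have hdiff : ∫ w in Ω, (g w - f w) = 1 - overlap Ω p₀ p₁ α := by
    rw [integral_sub hig hif, hIg]
    rfl
  have hzeroiff : (∫ w in Ω, (g w - f w)) = 0 ↔
      (fun w => g w - f w) =ᵐ[volume.restrict Ω] 0 :=
    integral_eq_zero_iff_of_nonneg_ae hnnae (hig.sub hif)
  have hiff : ∀ᵐ w ∂(volume.restrict Ω), (g w - f w = 0 ↔ p₀ w = p₁ w) := by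
    refine (ae_restrict_iff' hΩmeas).2 (ae_of_all _ fun w hw => ?_)
    rw [hpt w hw]
    have hd := hdpos w hw
    rw [div_eq_zero_iff]
    constructor
    · rintro (h | h)
      · rcases mul_eq_zero.mp h with h' | h'
        · exact absurd h' (by positivity)
        · exact sub_eq_zero.mp (pow_eq_zero_iff (by norm_num) |>.mp h')
      · exact absurd h hd.ne'
    · intro h
      left
      rw [sub_eq_zero.mpr h]
      ring
  constructor
  · intro hov
    have : (∫ w in Ω, (g w - f w)) = 0 := by rw [hdiff, hov]; ring
    have h0 := hzeroiff.mp this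
    filter_upwards [h0, hiff] with w hw1 hw2
    exact hw2.mp hw1
  · intro hae
    have h0 : (fun w => g w - f w) =ᵐ[volume.restrict Ω] 0 := by
      filter_upwards [hae, hiff] with w hw1 hw2
      exact hw2.mpr hw1
    have := hzeroiff.mpr h0
    rw [hdiff] at this
    linarith
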